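/- Fully discrete L² stability: under the semi-implicit scheme (f^{s+1} − f^s, φ)_p = −Δt · B_L(f^{s+1}, W^s, φ) with B_L(f, W, f) = ∬ (L_h f)² W B ≥ 0 whenever W ≥ 0, if W^s ≥ 0 pointwise for all s then ‖f^s‖_{L²} ≤ ‖f^0‖_{L²} for all s ≥ 0. -/

import Mathlib

open MeasureTheory

/-- Fully discrete L² stability of the semi-implicit scheme: if
`(f^{s+1} − f^s, φ)_p = −Δt · B_L(f^{s+1}, W^s, φ)` for all test functions `φ` in
the finite element space, and `W^s ≥ 0` pointwise for all `s` with `B ≥ 0`, then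
`‖f^s‖_{L²} ≤ ‖f^0‖_{L²}` for all `s ≥ 0`. -/
theorem stmt11 {P K : Type*} [MeasureSpace P] [MeasureSpace K]
    (Lh : (P → ℝ) → P × K → ℝ)
    (V : Submodule ℝ (P → ℝ)) (hV : FiniteDimensional ℝ V)
    (f : ℕ → P → ℝ) (W : ℕ → K → ℝ) (B : P × K → ℝ)
    (Δt : ℝ) (hΔt : 0 < Δt)
    (hfV : ∀ s, f s ∈ V)
    (hfL2 : ∀ s, MemLp (f s) 2 volume)
    (hW : ∀ s k, 0 ≤ W s k) (hB : ∀ pk, 0 ≤ B pk)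
    (hscheme : ∀ (s : ℕ), ∀ φ ∈ V,
      (∫ p, (f (s+1) p - f s p) * φ p)
        = -Δt * ∫ pk : P × K, Lh φ pk * Lh (f (s+1)) pk * W s pk.2 * B pk)
    (hBL : ∀ s, Integrable
      (fun pk : P × K => Lh (f (s+1)) pk * Lh (f (s+1)) pk * W s pk.2 * B pk)) :
    ∀ s : ℕ, eLpNorm (f s) 2 volume ≤ eLpNorm (f 0) 2 volume := by
  have step : ∀ s : ℕ, eLpNorm (f (s+1)) 2 volume ≤ eLpNorm (f s) 2 volume := by
    intro s
    set g : Lp ℝ 2 (volume : Measure P) := (hfL2 s).toLp (f s) with hg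
    set h : Lp ℝ 2 (volume : Measure P) := (hfL2 (s+1)).toLp (f (s+1)) with hh
    have hgae : (g : P → ℝ) =ᵐ[volume] f s := (hfL2 s).coeFn_toLp
    have hhae : (h : P → ℝ) =ᵐ[volume] f (s+1) := (hfL2 (s+1)).coeFn_toLp
    -- inner products in terms of integrals
    have hinner_gh : (inner ℝ g h : ℝ) = ∫ p, f s p * f (s+1) p := by
      rw [L2.inner_def]
      refine integral_congr_ae ?_
      filter_upwards [hgae, hhae] with p hp hq
      simp [hp, hq, RCLike.inner_apply, mul_comm]
    have hinner_hh : (inner ℝ h h : ℝ) = ∫ p, f (s+1) p * f (s+1) p := by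
      rw [L2.inner_def]
      refine integral_congr_ae ?_
      filter_upwards [hhae] with p hq
      simp [hq, RCLike.inner_apply, pow_two]
    -- integrability of products
    have hi_hh : Integrable (fun p => f (s+1) p * f (s+1) p) volume := by
      simpa [pow_two] using (hfL2 (s+1)).integrable_sq
    have hi_gh : Integrable (fun p => f s p * f (s+1) p) volume := by
      refine (L2.integrable_inner (𝕜 := ℝ) g h).congr ?_
      filter_upwards [hgae, hhae] with p hp hq
      simp [hp, hq, RCLike.inner_apply, mul_comm]
    -- the scheme with φ = f (s+1)
    have h1 := hscheme s (f (s+1)) (hfV (s+1))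
    have hI : 0 ≤ ∫ pk : P × K,
        Lh (f (s+1)) pk * Lh (f (s+1)) pk * W s pk.2 * B pk := by
      refine integral_nonneg fun pk => ?_
      have h2 := mul_self_nonneg (Lh (f (s+1)) pk)
      exact mul_nonneg (mul_nonneg h2 (hW s pk.2)) (hB pk)
    have hRHS : (∫ p, (f (s+1) p - f s p) * f (s+1) p) ≤ 0 := by
      rw [h1]
      have : 0 ≤ Δt * ∫ pk : P × K,
          Lh (f (s+1)) pk * Lh (f (s+1)) pk * W s pk.2 * B pk :=
        mul_nonneg hΔt.le hI
      linarith
    have hsplit : (∫ p, (f (s+1) p - f s p) * f (s+1) p)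
        = (∫ p, f (s+1) p * f (s+1) p) - ∫ p, f s p * f (s+1) p := by
      rw [← integral_sub hi_hh hi_gh]
      congr 1
      ext p
      ring
    have hkey : (inner ℝ h h : ℝ) ≤ inner ℝ g h := by
      rw [hinner_hh, hinner_gh]
      have := hsplit ▸ hRHS
      linarith
    have hnorm : ‖h‖ ≤ ‖g‖ := by
      have h2 : ‖h‖ ^ 2 ≤ ‖g‖ * ‖h‖ := by
        calc ‖h‖ ^ 2 = inner ℝ h h := (real_inner_self_eq_norm_sq h).symm
          _ ≤ inner ℝ g h := hkey
          _ ≤ ‖g‖ * ‖h‖ := real_inner_le_norm g h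
      rcases eq_or_lt_of_le (norm_nonneg h) with h0 | h0
      · rw [← h0]; exact norm_nonneg g
      · nlinarith
    have hgnorm : ‖g‖ = (eLpNorm (f s) 2 volume).toReal := Lp.norm_toLp _ _
    have hhnorm : ‖h‖ = (eLpNorm (f (s+1)) 2 volume).toReal := Lp.norm_toLp _ _
    rw [hgnorm, hhnorm] at hnorm
    exact (ENNReal.toReal_le_toReal (hfL2 (s+1)).eLpNorm_ne_top
      (hfL2 s).eLpNorm_ne_top).mp hnorm
  intro s
  induction s with
  | zero => exact le_rfl
  | succ n ih => exact le_trans (step n) ih
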